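/- The specialization order of the ⇒_P-convergence topology on the set SV(X) of simple valuations over a directed space X coincides with the pointwise order on valuations. -/

import Mathlib

open Set

/-- The specialization order on a topological space: `x ⊑ y` iff `x ∈ closure {y}`. -/
def sOrd (X : Type*) [TopologicalSpace X] (x y : X) : Prop := x ∈ closure {y}

/-- A directed subset `D`, viewed as a net indexed by itself, converges to `x`:
it is eventually in every open neighborhood of `x`. -/
def dconv (X : Type*) [TopologicalSpace X] (D : Set X) (x : X) : Prop :=
  D.Nonempty ∧ DirectedOn (sOrd X) D ∧
    ∀ U : Set X, IsOpen U → x ∈ U → ∃ d ∈ D, ∀ e ∈ D, sOrd X d e → e ∈ U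

/-- A subset `U` is directed open if every directed net converging to a point of `U`
meets `U`. -/
def dOpen (X : Type*) [TopologicalSpace X] (U : Set X) : Prop :=
  ∀ D x, dconv X D x → x ∈ U → (D ∩ U).Nonempty

open scoped ENNReal
open Classical in
/-- The point valuation `η_x`: `η_x U = 1` if `x ∈ U`, else `0`. -/
noncomputable def pv {X : Type*} (x : X) (U : Set X) : ℝ≥0∞ :=
  if x ∈ U then 1 else 0

open Classical in
/-- The simple valuation `Σ_{b ∈ B} r b · η_b`. -/
noncomputable def simpleVal {X : Type*} (B : Finset X) (r : X → ℝ≥0∞) (U : Set X) : ℝ≥0∞ :=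
  ∑ b ∈ B, if b ∈ U then r b else 0

/-- The pointwise order on valuations, comparing values on open sets. -/
def svLe {X : Type*} [TopologicalSpace X] (ξ η : Set X → ℝ≥0∞) : Prop :=
  ∀ U : Set X, IsOpen U → ξ U ≤ η U

/-- The set `SV(X)` of simple valuations on `X`. -/
def SVset (X : Type*) [TopologicalSpace X] : Set (Set X → ℝ≥0∞) :=
  {ξ | ∃ (B : Finset X) (r : X → ℝ≥0∞),
    (∀ b ∈ B, 0 < r b ∧ r b ≠ ⊤) ∧ ξ = fun U => simpleVal B r U}

open Classical in
/-- The simple valuation `Σ_{b ∈ B} r' b · η_{d b}` obtained by moving each support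
point `b` to `d b` and shrinking coefficients to `r' b`. -/
noncomputable def shiftVal {X : Type*} (B : Finset X) (d : X → X) (r' : X → ℝ≥0∞)
    (U : Set X) : ℝ≥0∞ :=
  ∑ b ∈ B, if d b ∈ U then r' b else 0

/-- The convergence relation `𝔇 ⇒_P ξ` on simple valuations: `𝔇` is a directed family
of simple valuations, `ξ = Σ_{b∈B} r_b η_b`, there are directed sets `D_b → b` in `X`,
and for every choice `d b ∈ D b` and every `r' b < r b` some member of `𝔇` dominates
`Σ_{b∈B} r'_b η_{d b}`. -/
def PConv {X : Type*} [TopologicalSpace X] (𝔇 : Set (Set X → ℝ≥0∞))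
    (ξ : Set X → ℝ≥0∞) : Prop :=
  𝔇 ⊆ SVset X ∧ 𝔇.Nonempty ∧ DirectedOn svLe 𝔇 ∧
    ∃ (B : Finset X) (r : X → ℝ≥0∞),
      (∀ b ∈ B, 0 < r b ∧ r b ≠ ⊤) ∧ (ξ = fun U => simpleVal B r U) ∧
      ∃ D : X → Set X, (∀ b ∈ B, dconv X (D b) b) ∧
        ∀ d : X → X, (∀ b ∈ B, d b ∈ D b) →
          ∀ r' : X → ℝ≥0∞, (∀ b ∈ B, r' b < r b) →
            ∃ ξ' ∈ 𝔇, svLe (shiftVal B d r') ξ'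

/-- `⇒_P`-convergence open subsets of `SV(X)`. -/
def POpen {X : Type*} [TopologicalSpace X] (𝔘 : Set (Set X → ℝ≥0∞)) : Prop :=
  𝔘 ⊆ SVset X ∧ ∀ 𝔇 ξ, PConv 𝔇 ξ → ξ ∈ 𝔘 → (𝔇 ∩ 𝔘).Nonempty

/-- For a directed space `X`, the specialization order of the
`⇒_P`-convergence topology on `SV(X)` coincides with the pointwise order:
`ξ` lies in the closure of `{η}` (every `⇒_P`-open set containing `ξ` contains `η`)
iff `ξ ≤ η` pointwise. -/
theorem stmt_12 {X : Type*} [TopologicalSpace X] [T0Space X]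
    (hX : ∀ U : Set X, dOpen X U ↔ IsOpen U)
    (ξ η : Set X → ℝ≥0∞) (hξ : ξ ∈ SVset X) (hη : η ∈ SVset X) :
    (∀ 𝔘 : Set (Set X → ℝ≥0∞), POpen 𝔘 → ξ ∈ 𝔘 → η ∈ 𝔘) ↔ svLe ξ η := by
  constructor
  · -- forward: closure membership implies pointwise order
    intro h U hU
    by_contra hlt
    push_neg at hlt
    set c := η U with hc
    -- the open set of simple valuations exceeding c on U
    set 𝔘 : Set (Set X → ℝ≥0∞) := {ζ | ζ ∈ SVset X ∧ c < ζ U} with h𝔘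
    have hPO : POpen 𝔘 := by
      constructor
      · intro ζ hζ; exact hζ.1
      · rintro 𝔇 ζ ⟨h𝔇sub, -, -, B, r, hr, hζeq, D, hD, hkey⟩ hζ𝔘
        classical
        have hζU : c < ζ U := hζ𝔘.2
        have hζUval : ζ U = ∑ b ∈ B, if b ∈ U then r b else 0 := by
          rw [hζeq]; rfl
        set S : ℝ≥0∞ := ∑ b ∈ B, if b ∈ U then r b else 0 with hS
        have hcS : c < S := by rw [← hζUval]; exact hζU
        have hS0 : S ≠ 0 := by
          intro h0; rw [h0] at hcS; exact (not_lt_of_ge (zero_le (a := c))) hcS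
        have hSt : S ≠ ⊤ := by
          refine (ENNReal.sum_lt_top.mpr ?_).ne
          intro b hb
          split
          · exact lt_top_iff_ne_top.mpr (hr b hb).2
          · exact ENNReal.zero_lt_top
        have hdiv : c / S < 1 := by
          rw [ENNReal.div_lt_iff (Or.inl hS0) (Or.inl hSt), one_mul]
          exact hcS
        obtain ⟨a, ha1, ha2⟩ := exists_between hdiv
        -- pick points d b ∈ D b, inside U when b ∈ U
        have hDU : ∀ b ∈ B, b ∈ U → (D b ∩ U).Nonempty := by
          intro b hb hbU
          exact ((hX U).mpr hU) (D b) b (hD b hb) hbU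
        have hDne : ∀ b ∈ B, (D b).Nonempty := fun b hb => (hD b hb).1
        set d : X → X := fun b =>
          if hb : b ∈ B then
            (if hbU : b ∈ U then (hDU b hb hbU).choose else (hDne b hb).choose)
          else b with hd
        have hdD : ∀ b ∈ B, d b ∈ D b := by
          intro b hb
          simp only [hd, dif_pos hb]
          split
          · exact (hDU b hb ‹b ∈ U›).choose_spec.1
          · exact (hDne b hb).choose_spec
        have hdU : ∀ b ∈ B, b ∈ U → d b ∈ U := by
          intro b hb hbU
          simp only [hd, dif_pos hb, dif_pos hbU]
          exact (hDU b hb hbU).choose_spec.2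
        set r' : X → ℝ≥0∞ := fun b => a * r b with hr'
        have hr'lt : ∀ b ∈ B, r' b < r b := by
          intro b hb
          have : a * r b < 1 * r b :=
            by have := ENNReal.mul_lt_mul_right (hr b hb).1.ne' (hr b hb).2 ha2; rwa [mul_comm (r b) a, mul_comm (r b) 1] at this
          simpa using this
        obtain ⟨ξ', hξ'𝔇, hsv⟩ := hkey d hdD r' hr'lt
        refine ⟨ξ', hξ'𝔇, h𝔇sub hξ'𝔇, ?_⟩
        have h1 : c < a * S := by
          rw [← ENNReal.div_lt_iff (Or.inl hS0) (Or.inl hSt)]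
          exact ha1
        have h2 : a * S = ∑ b ∈ B, if b ∈ U then r' b else 0 := by
          rw [hS, Finset.mul_sum]
          refine Finset.sum_congr rfl fun b hb => ?_
          simp [hr', mul_ite]
        have h3 : (∑ b ∈ B, if b ∈ U then r' b else 0) ≤ shiftVal B d r' U := by
          refine Finset.sum_le_sum fun b hb => ?_
          by_cases hbU : b ∈ U
          · rw [if_pos hbU, if_pos (hdU b hb hbU)]
          · simp [hbU]
        calc c < a * S := h1
          _ = ∑ b ∈ B, if b ∈ U then r' b else 0 := h2
          _ ≤ shiftVal B d r' U := h3
          _ ≤ ξ' U := hsv U hU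
    have hη𝔘 : η ∈ 𝔘 := h 𝔘 hPO ⟨hξ, hlt⟩
    exact lt_irrefl c hη𝔘.2
  · -- backward: pointwise order implies closure membership
    intro hle 𝔘 hPO hξ𝔘
    obtain ⟨B, r, hr, hξeq⟩ := hξ
    have hconv : PConv {η} ξ := by
      refine ⟨by simpa using hη, ⟨η, rfl⟩, ?_, B, r, hr, hξeq, fun x => {x}, ?_, ?_⟩
      · intro x hx y hy
        rw [Set.mem_singleton_iff] at hx hy
        refine ⟨x, by rw [hx]; exact rfl, fun U _ => le_rfl, ?_⟩
        rw [hx, hy]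
        exact fun U _ => le_rfl
      · intro b hb
        refine ⟨⟨b, rfl⟩, ?_, ?_⟩
        · intro x hx y hy
          rw [Set.mem_singleton_iff] at hx hy
          refine ⟨x, by rw [hx]; exact rfl, ?_, ?_⟩
          · exact subset_closure rfl
          · rw [hx, hy]; exact subset_closure rfl
        · intro U hU hbU
          exact ⟨b, rfl, fun e he _ => he ▸ hbU⟩
      · intro d hd r' hr' 
        refine ⟨η, rfl, fun U hU => ?_⟩
        have hsv : shiftVal B d r' U ≤ ξ U := by
          rw [hξeq]
          refine Finset.sum_le_sum fun b hb => ?_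
          have hdb : d b = b := hd b hb
          rw [hdb]
          split
          · exact (hr' b hb).le
          · exact le_rfl
        exact hsv.trans (hle U hU)
    obtain ⟨ζ, hζη, hζ𝔘⟩ := hPO.2 {η} ξ hconv hξ𝔘
    rwa [hζη] at hζ𝔘
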